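/- For a product ring A = A₁ × A₂ of commutative rings, the least n such that the zero ideal of A is strongly n-absorbing is the sum of the corresponding least values for A₁ and A₂ (assuming both are finite). -/

import Mathlib

def IsStronglyAbsorbing {A : Type*} [CommRing A] (α : Ideal A) (n : ℕ) : Prop :=
  ∀ γ : Fin (n + 1) → Ideal A, (∏ i, γ i) ≤ α →
    ∃ j, (∏ i ∈ Finset.univ.erase j, γ i) ≤ α

section Helpers

variable {A : Type*} [CommRing A] {α : Ideal A} {n : ℕ}

lemma prodsub {ι : Type*} [DecidableEq ι] {f : ι → Ideal A} {s t : Finset ι} (h : t ⊆ s) :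
    ∏ i ∈ s, f i ≤ ∏ i ∈ t, f i := by
  rw [← Finset.prod_sdiff h]; exact Ideal.mul_le_right

lemma prod_filter_val {M : Type*} [CommMonoid M] {a b : ℕ} (hab : a + 1 ≤ b + 1)
    (q : ℕ → Prop) [DecidablePred q] (hq : ∀ x, q x → x ≤ a) (g : Fin (b + 1) → M) :
    ∏ i ∈ Finset.univ.filter (fun i : Fin (a + 1) => q i.val), g (Fin.castLE hab i) =
      ∏ k ∈ Finset.univ.filter (fun k : Fin (b + 1) => q k.val), g k := by
  refine Finset.prod_bij' (fun i _ => Fin.castLE hab i)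
    (fun k hk => ⟨k.val, Nat.lt_succ_of_le (hq _ (by simpa using (Finset.mem_filter.mp hk).2))⟩)
    ?_ ?_ ?_ ?_ ?_ <;> simp +contextual [Fin.ext_iff, Fin.castLE]

-- Ideal.prod multiplication
lemma prodmul {A₁ A₂ : Type*} [CommRing A₁] [CommRing A₂] (I K : Ideal A₁) (J L : Ideal A₂) :
    Ideal.prod I J * Ideal.prod K L = Ideal.prod (I * K) (J * L) := by
  apply le_antisymm
  · rw [Ideal.mul_le]
    rintro ⟨a, b⟩ ⟨ha, hb⟩ ⟨c, d⟩ ⟨hc, hd⟩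
    exact ⟨Ideal.mul_mem_mul ha hc, Ideal.mul_mem_mul hb hd⟩
  · rintro ⟨x, y⟩ ⟨hx, hy⟩
    have hx' : ((x, 0) : A₁ × A₂) ∈ Ideal.prod I J * Ideal.prod K L := by
      refine Submodule.mul_induction_on (C := fun z => ((z, (0:A₂)) : A₁ × A₂) ∈ Ideal.prod I J * Ideal.prod K L)
        hx (fun a ha c hc => ?_) (fun r s hr hs => ?_)
      · have : ((a * c, 0) : A₁ × A₂) = (a, 0) * (c, 0) := by simp
        beta_reduce
        rw [this]
        exact Ideal.mul_mem_mul ⟨ha, J.zero_mem⟩ ⟨hc, L.zero_mem⟩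
      · have : ((r + s, 0) : A₁ × A₂) = (r, 0) + (s, 0) := by simp
        beta_reduce; rw [this]; exact add_mem hr hs
    have hy' : ((0, y) : A₁ × A₂) ∈ Ideal.prod I J * Ideal.prod K L := by
      refine Submodule.mul_induction_on (C := fun z => (((0:A₁), z) : A₁ × A₂) ∈ Ideal.prod I J * Ideal.prod K L)
        hy (fun a ha c hc => ?_) (fun r s hr hs => ?_)
      · have : (((0 : A₁), a * c) : A₁ × A₂) = (0, a) * (0, c) := by simp
        beta_reduce
        rw [this]
        exact Ideal.mul_mem_mul ⟨I.zero_mem, ha⟩ ⟨K.zero_mem, hc⟩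
      · have : (((0 : A₁), r + s) : A₁ × A₂) = (0, r) + (0, s) := by simp
        beta_reduce; rw [this]; exact add_mem hr hs
    have : ((x, y) : A₁ × A₂) = (x, 0) + (0, y) := by simp
    rw [this]; exact add_mem hx' hy'

lemma prodprod {A₁ A₂ ι : Type*} [CommRing A₁] [CommRing A₂] (s : Finset ι)
    (f : ι → Ideal A₁) (g : ι → Ideal A₂) :
    ∏ i ∈ s, Ideal.prod (f i) (g i) = Ideal.prod (∏ i ∈ s, f i) (∏ i ∈ s, g i) := by
  classical
  induction s using Finset.induction_on with
  | empty => simp [Ideal.one_eq_top]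
  | insert _ _ h ih => rw [Finset.prod_insert h, Finset.prod_insert h, Finset.prod_insert h, ih, prodmul]

lemma prodbotbot {A₁ A₂ : Type*} [CommRing A₁] [CommRing A₂] :
    Ideal.prod (⊥ : Ideal A₁) (⊥ : Ideal A₂) = ⊥ := by
  ext ⟨x, y⟩
  simp [Ideal.mem_prod, Prod.ext_iff]

lemma absorb_step (h : IsStronglyAbsorbing α n) {m : ℕ} (hnm : n ≤ m) (γ : Fin (m + 1) → Ideal A)
    (hp : (∏ i, γ i) ≤ α) : ∃ j, (∏ i ∈ Finset.univ.erase j, γ i) ≤ α := by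
  classical
  have hab : n + 1 ≤ m + 1 := by omega
  set T : Ideal A := ∏ k ∈ Finset.univ.filter (fun k : Fin (m + 1) => ¬ (k : ℕ) < n), γ k with hT
  set δ : Fin (n + 1) → Ideal A :=
    fun i => if (i : ℕ) < n then γ (Fin.castLE hab i) else T with hδ
  have hsplitδ : ∀ s : Finset (Fin (n + 1)), ∏ i ∈ s, δ i =
      (∏ i ∈ s.filter (fun i : Fin (n+1) => (i : ℕ) < n), γ (Fin.castLE hab i)) *
      ∏ i ∈ s.filter (fun i : Fin (n+1) => ¬ (i : ℕ) < n), T := by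
    intro s
    rw [← Finset.prod_filter_mul_prod_filter_not s (fun i : Fin (n+1) => (i : ℕ) < n) δ]
    congr 1
    · exact Finset.prod_congr rfl (by intro i hi; simp only [Finset.mem_filter] at hi; simp [hδ, hi.2])
    · exact Finset.prod_congr rfl (by intro i hi; simp only [Finset.mem_filter] at hi; simp [hδ, hi.2])
  have htot : ∏ i, δ i = ∏ i, γ i := by
    rw [hsplitδ, prod_filter_val hab (fun x => x < n) (by omega) γ]
    have h1 : (Finset.univ.filter (fun i : Fin (n+1) => ¬ (i : ℕ) < n)) = {Fin.last n} := by
      ext i; simp [Fin.ext_iff, Fin.last]; omega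
    rw [h1, Finset.prod_singleton]
    exact Finset.prod_filter_mul_prod_filter_not _ _ _
  obtain ⟨p, hpp⟩ := h δ (htot ▸ hp)
  by_cases hc : (p : ℕ) < n
  · -- use j = castLE p
    refine ⟨Fin.castLE hab p, ?_⟩
    have herase : ∀ (N : ℕ) (x : Fin (N + 1)),
        (Finset.univ.erase x) = Finset.univ.filter (fun i : Fin (N+1) => ¬ i = x) := by
      intro N x; ext i; simp
    rw [herase] at hpp
    rw [herase]
    -- split target
    rw [← Finset.prod_filter_mul_prod_filter_not
      (Finset.univ.filter (fun i : Fin (m+1) => ¬ i = Fin.castLE hab p)) (fun i => (i : ℕ) < n) γ]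
    rw [hsplitδ] at hpp
    rw [Finset.filter_filter, Finset.filter_filter] at hpp ⊢
    have A1 : Finset.univ.filter (fun i : Fin (m+1) => ¬ i = Fin.castLE hab p ∧ (i:ℕ) < n)
        = Finset.univ.filter (fun i : Fin (m+1) => ¬ (i:ℕ) = (p:ℕ) ∧ (i:ℕ) < n) :=
      Finset.filter_congr (by intro i _; simp [Fin.ext_iff])
    have A2 : Finset.univ.filter (fun i : Fin (n+1) => ¬ i = p ∧ (i:ℕ) < n)
        = Finset.univ.filter (fun i : Fin (n+1) => ¬ (i:ℕ) = (p:ℕ) ∧ (i:ℕ) < n) :=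
      Finset.filter_congr (by intro i _; simp [Fin.ext_iff])
    have e1 : ∏ i ∈ Finset.univ.filter (fun i : Fin (m+1) => ¬ i = Fin.castLE hab p ∧ (i:ℕ) < n), γ i
        = ∏ i ∈ Finset.univ.filter (fun i : Fin (n+1) => ¬ i = p ∧ (i:ℕ) < n), γ (Fin.castLE hab i) := by
      rw [A1, A2]
      exact (prod_filter_val hab (fun x => ¬ x = (p:ℕ) ∧ x < n) (by omega) γ).symm
    have e2 : (Finset.univ.filter (fun i : Fin (m+1) => ¬ i = Fin.castLE hab p ∧ ¬ (i:ℕ) < n))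
        = Finset.univ.filter (fun i : Fin (m+1) => ¬ (i:ℕ) < n) := by
      ext i; simp only [Finset.mem_filter, Finset.mem_univ, true_and, Fin.ext_iff]
      constructor
      · exact fun h => h.2
      · intro h; refine ⟨?_, h⟩; simp only [Fin.castLE]; omega
    have e3 : (Finset.univ.filter (fun i : Fin (n+1) => ¬ i = p ∧ ¬ (i:ℕ) < n)) = {Fin.last n} := by
      ext i; simp [Fin.ext_iff, Fin.last]; omega
    rw [e3, Finset.prod_singleton] at hpp
    rw [e1, e2, ← hT]
    exact hpp
  · -- p = last n; use j = last m
    have hplast : p = Fin.last n := by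
      apply Fin.ext; simp [Fin.last]; omega
    refine ⟨Fin.last m, ?_⟩
    have hsub : Finset.univ.filter (fun i : Fin (m+1) => (i:ℕ) < n) ⊆ Finset.univ.erase (Fin.last m) := by
      intro i hi
      simp only [Finset.mem_filter, Finset.mem_univ, true_and] at hi
      refine Finset.mem_erase.mpr ⟨?_, Finset.mem_univ _⟩
      intro hC
      rw [hC, Fin.val_last] at hi
      omega
    refine le_trans (prodsub hsub) ?_
    rw [hsplitδ] at hpp
    have e4 : ((Finset.univ.erase p).filter (fun i : Fin (n+1) => (i:ℕ) < n)) = Finset.univ.filter (fun i : Fin (n+1) => (i:ℕ) < n) := by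
      subst hplast; ext i; simp [Fin.ext_iff, Fin.val_last]; omega
    have e5 : ((Finset.univ.erase p).filter (fun i : Fin (n+1) => ¬ (i:ℕ) < n)) = ∅ := by
      subst hplast; ext i; simp [Fin.ext_iff, Fin.val_last]; omega
    rw [e4, e5, Finset.prod_empty, mul_one, prod_filter_val hab (fun x => x < n) (by omega) γ] at hpp
    exact hpp

lemma erase_step {ι : Type*} [DecidableEq ι] (h : IsStronglyAbsorbing α n) (γ : ι → Ideal A)
    (s : Finset ι) {M : ℕ} (hs : s.card = M + 1) (hnM : n ≤ M) (hp : ∏ i ∈ s, γ i ≤ α) :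
    ∃ j ∈ s, ∏ i ∈ s.erase j, γ i ≤ α := by
  let e : Fin (M + 1) ≃ {x // x ∈ s} := (finCongr hs.symm).trans s.equivFin.symm
  have htot : ∏ i : Fin (M + 1), γ (e i) = ∏ i ∈ s, γ i := by
    rw [← Finset.prod_coe_sort s γ]
    exact Equiv.prod_comp e (fun x : s => γ x)
  obtain ⟨j, hj⟩ := absorb_step h hnM (fun i => γ (e i)) (by rw [htot]; exact hp)
  refine ⟨(e j : ι), (e j).2, ?_⟩
  have heq : ∏ i ∈ s.erase (e j : ι), γ i = ∏ i ∈ Finset.univ.erase j, γ (e i) := by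
    refine Finset.prod_bij' (fun a ha => e.symm ⟨a, Finset.mem_of_mem_erase ha⟩)
      (fun b _ => (e b : ι)) ?_ ?_ ?_ ?_ ?_
    · intro a ha
      simp only [Finset.mem_erase, Finset.mem_univ, and_true]
      intro hC
      have h2 := congrArg e hC
      simp only [Equiv.apply_symm_apply] at h2
      apply (Finset.mem_erase.mp ha).1
      rw [← Subtype.ext_iff.mp h2]
    · intro b hb
      refine Finset.mem_erase.mpr ⟨?_, (e b).2⟩
      intro hC
      exact (Finset.mem_erase.mp hb).1 (e.injective (Subtype.ext hC))
    · intro a ha; simp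
    · intro b hb; simp
    · intro a ha; simp
  rw [heq]
  exact hj

lemma absorb_subset {ι : Type*} [DecidableEq ι] (h : IsStronglyAbsorbing α n)
    (γ : ι → Ideal A) (s : Finset ι) (hcard : n ≤ s.card) (hp : (∏ i ∈ s, γ i) ≤ α) :
    ∃ t ⊆ s, t.card = n ∧ (∏ i ∈ t, γ i) ≤ α := by
  obtain ⟨N, hN⟩ : ∃ N, s.card = N := ⟨_, rfl⟩
  induction N using Nat.strong_induction_on generalizing s with
  | _ N ih =>
    rcases eq_or_lt_of_le hcard with heq | hlt
    · exact ⟨s, subset_rfl, heq.symm, hp⟩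
    · have hN1 : s.card = (s.card - 1) + 1 := by omega
      obtain ⟨j, hjs, hj⟩ := erase_step h γ s hN1 (by omega) hp
      have hcard' : n ≤ (s.erase j).card := by
        rw [Finset.card_erase_of_mem hjs]; omega
      obtain ⟨t, hts, ht⟩ := ih ((s.erase j).card)
        (by rw [Finset.card_erase_of_mem hjs]; omega) (s.erase j) hcard' hj rfl
      exact ⟨t, hts.trans (Finset.erase_subset _ _), ht⟩

lemma absorb_mono (h : IsStronglyAbsorbing α n) {m : ℕ} (hnm : n ≤ m) :
    IsStronglyAbsorbing α m := by
  intro γ hp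
  obtain ⟨t, hts, htc, ht⟩ := absorb_subset h γ Finset.univ
    (by simp [Fintype.card_fin]; omega) hp
  have : t ≠ Finset.univ := by
    intro hC; rw [hC, Finset.card_univ, Fintype.card_fin] at htc; omega
  obtain ⟨j, hj⟩ : ∃ j, j ∉ t := by
    by_contra hC
    push_neg at hC
    exact this (Finset.eq_univ_iff_forall.mpr hC)
  refine ⟨j, le_trans (prodsub ?_) ht⟩
  intro x hx
  exact Finset.mem_erase.mpr ⟨fun hC => hj (hC ▸ hx), Finset.mem_univ _⟩

lemma Idealmapprod {R S ι : Type*} [CommRing R] [CommRing S] (f : R →+* S) (s : Finset ι)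
    (g : ι → Ideal R) : Ideal.map f (∏ i ∈ s, g i) = ∏ i ∈ s, Ideal.map f (g i) := by
  classical
  induction s using Finset.induction_on with
  | empty => simp [Ideal.one_eq_top, Ideal.map_top]
  | insert _ _ h ih => rw [Finset.prod_insert h, Finset.prod_insert h, Ideal.map_mul, ih]

lemma abs_prod_upper {A₁ A₂ : Type*} [CommRing A₁] [CommRing A₂] {n₁ n₂ : ℕ}
    (h₁ : IsStronglyAbsorbing (⊥ : Ideal A₁) n₁) (h₂ : IsStronglyAbsorbing (⊥ : Ideal A₂) n₂) :
    IsStronglyAbsorbing (⊥ : Ideal (A₁ × A₂)) (n₁ + n₂) := by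
  intro γ hp
  set B : Fin (n₁ + n₂ + 1) → Ideal A₁ := fun k => Ideal.map (RingHom.fst A₁ A₂) (γ k) with hB
  set C : Fin (n₁ + n₂ + 1) → Ideal A₂ := fun k => Ideal.map (RingHom.snd A₁ A₂) (γ k) with hC
  have hBp : (∏ k, B k) ≤ ⊥ := by
    rw [hB, ← Idealmapprod]
    calc Ideal.map (RingHom.fst A₁ A₂) (∏ i, γ i) ≤ Ideal.map _ ⊥ := Ideal.map_mono hp
    _ = ⊥ := Ideal.map_bot
  have hCp : (∏ k, C k) ≤ ⊥ := by
    rw [hC, ← Idealmapprod]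
    calc Ideal.map (RingHom.snd A₁ A₂) (∏ i, γ i) ≤ Ideal.map _ ⊥ := Ideal.map_mono hp
    _ = ⊥ := Ideal.map_bot
  obtain ⟨t₁, -, ht₁c, ht₁⟩ := absorb_subset h₁ B Finset.univ
    (by simp; omega) hBp
  obtain ⟨t₂, -, ht₂c, ht₂⟩ := absorb_subset h₂ C Finset.univ
    (by simp; omega) hCp
  obtain ⟨j, hj⟩ : ∃ j : Fin (n₁ + n₂ + 1), j ∉ t₁ ∪ t₂ := by
    by_contra hcon
    push_neg at hcon
    have h1 : (Finset.univ : Finset (Fin (n₁ + n₂ + 1))) ⊆ t₁ ∪ t₂ := fun x _ => hcon x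
    have h2 := Finset.card_le_card h1
    have h3 := Finset.card_union_le t₁ t₂
    simp [ht₁c, ht₂c] at h2 h3
    omega
  refine ⟨j, ?_⟩
  intro x hx
  have hx1 : x.1 ∈ (⊥ : Ideal A₁) := by
    have hm : x.1 ∈ Ideal.map (RingHom.fst A₁ A₂) (∏ i ∈ Finset.univ.erase j, γ i) :=
      Ideal.mem_map_of_mem _ hx
    rw [Idealmapprod] at hm
    have hle : (∏ i ∈ Finset.univ.erase j, B i) ≤ ∏ i ∈ t₁, B i := by
      refine prodsub fun y hy => Finset.mem_erase.mpr ⟨?_, Finset.mem_univ _⟩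
      intro hC2; subst hC2; exact hj (Finset.mem_union_left _ hy)
    exact ht₁ (hle hm)
  have hx2 : x.2 ∈ (⊥ : Ideal A₂) := by
    have hm : x.2 ∈ Ideal.map (RingHom.snd A₁ A₂) (∏ i ∈ Finset.univ.erase j, γ i) :=
      Ideal.mem_map_of_mem _ hx
    rw [Idealmapprod] at hm
    have hle : (∏ i ∈ Finset.univ.erase j, C i) ≤ ∏ i ∈ t₂, C i := by
      refine prodsub fun y hy => Finset.mem_erase.mpr ⟨?_, Finset.mem_univ _⟩
      intro hC2; subst hC2; exact hj (Finset.mem_union_right _ hy)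
    exact ht₂ (hle hm)
  simp only [Ideal.mem_bot] at hx1 hx2 ⊢
  exact Prod.ext hx1 hx2

lemma exists_witness {N : ℕ} (hmem : IsStronglyAbsorbing (⊥ : Ideal A) N)
    (hmin : ∀ k < N, ¬ IsStronglyAbsorbing (⊥ : Ideal A) k) :
    ∃ β : Fin N → Ideal A,
      (∏ i, β i) ≤ ⊥ ∧ ∀ j, ¬ (∏ i ∈ Finset.univ.erase j, β i) ≤ ⊥ := by
  cases N with
  | zero =>
    obtain ⟨j, hj⟩ := hmem (fun _ => ⊥) (by simp)
    refine ⟨Fin.elim0, ?_, fun j => j.elim0⟩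
    have he : (Finset.univ : Finset (Fin 1)).erase j = ∅ := by
      ext i
      simp [Finset.mem_erase, Subsingleton.elim i j]
    rw [he, Finset.prod_empty] at hj
    simpa using hj
  | succ k =>
    have hk := hmin k (by omega)
    simp only [IsStronglyAbsorbing] at hk
    push_neg at hk
    obtain ⟨β, hβ, hβ'⟩ := hk
    exact ⟨β, hβ, hβ'⟩

lemma prod_fin_part {M' : Type*} [CommMonoid M'] {a c : ℕ} (hac : a ≤ c)
    (q : ℕ → Prop) [DecidablePred q] (hq : ∀ x, q x → x < a)
    (g : Fin c → M') (g' : Fin a → M') (hg : ∀ i : Fin a, g' i = g (Fin.castLE hac i)) :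
    ∏ k ∈ Finset.univ.filter (fun k : Fin c => q k.val), g k =
      ∏ i ∈ Finset.univ.filter (fun i : Fin a => q i.val), g' i := by
  refine Finset.prod_bij'
    (fun k hk => (⟨k.val, hq _ (by simpa using (Finset.mem_filter.mp hk).2)⟩ : Fin a))
    (fun i _ => Fin.castLE hac i) ?_ ?_ ?_ ?_ ?_
  · intro k hk
    simp only [Finset.mem_filter, Finset.mem_univ, true_and]
    simpa using (Finset.mem_filter.mp hk).2
  · intro i hi
    simp only [Finset.mem_filter, Finset.mem_univ, true_and]
    simpa using (Finset.mem_filter.mp hi).2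
  · intro k hk; apply Fin.ext; simp
  · intro i hi; apply Fin.ext; simp
  · intro k hk; rw [hg]; congr 1

lemma prod_fin_part' {M' : Type*} [CommMonoid M'] {a N c : ℕ} (hacn : c = a + N)
    (q : ℕ → Prop) [DecidablePred q] (hq : ∀ x, q x → a ≤ x)
    (g : Fin c → M') (g' : Fin N → M') (hg : ∀ i : Fin N, g' i = g ⟨a + i.val, by omega⟩) :
    ∏ k ∈ Finset.univ.filter (fun k : Fin c => q k.val), g k =
      ∏ i ∈ Finset.univ.filter (fun i : Fin N => q (a + i.val)), g' i := by
  refine Finset.prod_bij'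
    (fun k hk => (⟨k.val - a, by
      have h2 := hq _ (by simpa using (Finset.mem_filter.mp hk).2)
      have h3 := k.isLt
      omega⟩ : Fin N))
    (fun i _ => (⟨a + i.val, by omega⟩ : Fin c)) ?_ ?_ ?_ ?_ ?_
  · intro k hk
    have h2 := (Finset.mem_filter.mp hk).2
    simp only [Finset.mem_filter, Finset.mem_univ, true_and]
    have h3 : a + (k.val - a) = k.val := by
      have := hq k.val (by simpa using h2)
      omega
    rw [h3]
    simpa using h2
  · intro i hi
    simp only [Finset.mem_filter, Finset.mem_univ, true_and]
    simpa using (Finset.mem_filter.mp hi).2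
  · intro k hk
    apply Fin.ext
    have := hq k.val (by simpa using (Finset.mem_filter.mp hk).2)
    simp
    omega
  · intro i hi; apply Fin.ext; simp
  · intro k hk
    rw [hg]
    have := hq k.val (by simpa using (Finset.mem_filter.mp hk).2)
    congr 1
    apply Fin.ext
    simp
    omega

lemma not_abs {A₁ A₂ : Type*} [CommRing A₁] [CommRing A₂] {N₁ N₂ M : ℕ}
    (hMN : M + 1 = N₁ + N₂)
    (β : Fin N₁ → Ideal A₁) (hβ : (∏ i, β i) ≤ ⊥)
    (hβ' : ∀ j, ¬ (∏ i ∈ Finset.univ.erase j, β i) ≤ ⊥)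
    (δ : Fin N₂ → Ideal A₂) (hδ : (∏ i, δ i) ≤ ⊥)
    (hδ' : ∀ j, ¬ (∏ i ∈ Finset.univ.erase j, δ i) ≤ ⊥) :
    ¬ IsStronglyAbsorbing (⊥ : Ideal (A₁ × A₂)) M := by
  intro habs
  classical
  set B : Fin (M + 1) → Ideal A₁ := fun k =>
    if hk : (k : ℕ) < N₁ then β ⟨k, hk⟩ else ⊤ with hB
  set C : Fin (M + 1) → Ideal A₂ := fun k =>
    if hk : (k : ℕ) < N₁ then ⊤ else δ ⟨(k : ℕ) - N₁, by have := k.isLt; omega⟩ with hC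
  have herase : ∀ (x : Fin (M + 1)),
      (Finset.univ.erase x) = Finset.univ.filter (fun i : Fin (M + 1) => ¬ i = x) := by
    intro x; ext i; simp
  -- full products
  have hBfull : (∏ k, B k) ≤ ⊥ := by
    rw [← Finset.prod_filter_mul_prod_filter_not Finset.univ (fun k : Fin (M+1) => (k:ℕ) < N₁) B]
    have h1 : ∏ k ∈ Finset.univ.filter (fun k : Fin (M+1) => (k:ℕ) < N₁), B k
        = ∏ i ∈ Finset.univ.filter (fun i : Fin N₁ => (i:ℕ) < N₁), β i := by
      refine prod_fin_part (by omega) (fun x => x < N₁) (fun x h => h) B β ?_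
      intro i
      simp [hB, i.isLt]
    rw [h1, Finset.filter_true_of_mem (fun i _ => i.isLt)]
    exact le_trans Ideal.mul_le_left hβ
  have hCfull : (∏ k, C k) ≤ ⊥ := by
    rw [← Finset.prod_filter_mul_prod_filter_not Finset.univ (fun k : Fin (M+1) => (k:ℕ) < N₁) C]
    have h1 : ∏ k ∈ Finset.univ.filter (fun k : Fin (M+1) => ¬ (k:ℕ) < N₁), C k
        = ∏ i ∈ Finset.univ.filter (fun i : Fin N₂ => ¬ N₁ + (i:ℕ) < N₁), δ i := by
      refine prod_fin_part' hMN (fun x => ¬ x < N₁) (fun x h => by omega) C δ ?_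
      intro i
      simp only [hC]
      rw [dif_neg (by omega)]
      congr 1
      apply Fin.ext
      simp
    have h4 : Finset.univ.filter (fun i : Fin N₂ => ¬ N₁ + (i:ℕ) < N₁) = Finset.univ :=
      Finset.filter_true_of_mem (fun i _ => by omega)
    rw [h1, h4]
    exact le_trans Ideal.mul_le_right hδ
  have htot : (∏ k, Ideal.prod (B k) (C k)) ≤ ⊥ := by
    rw [prodprod]
    rintro ⟨z1, z2⟩ ⟨hz1, hz2⟩
    have e1 : z1 = 0 := by simpa [Ideal.mem_bot] using hBfull hz1
    have e2 : z2 = 0 := by simpa [Ideal.mem_bot] using hCfull hz2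
    simp [Ideal.mem_bot, e1, e2]
  obtain ⟨j, hj⟩ := habs (fun k => Ideal.prod (B k) (C k)) htot
  rw [prodprod] at hj
  by_cases hjv : (j : ℕ) < N₁
  · -- contradiction with hβ' j₀
    set j₀ : Fin N₁ := ⟨j, hjv⟩ with hj₀
    obtain ⟨x, hx, hx0⟩ := SetLike.not_le_iff_exists.mp (hβ' j₀)
    have hmem1 : x ∈ ∏ i ∈ Finset.univ.erase j, B i := by
      have heq : ∏ i ∈ Finset.univ.erase j, B i = ∏ i ∈ Finset.univ.erase j₀, β i := by
        rw [herase j,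
          ← Finset.prod_filter_mul_prod_filter_not
            (Finset.univ.filter (fun i : Fin (M+1) => ¬ i = j)) (fun i => (i:ℕ) < N₁) B,
          Finset.filter_filter, Finset.filter_filter]
        have A1 : Finset.univ.filter (fun i : Fin (M+1) => ¬ i = j ∧ (i:ℕ) < N₁)
            = Finset.univ.filter (fun i : Fin (M+1) => (¬ (i:ℕ) = (j:ℕ) ∧ (i:ℕ) < N₁)) :=
          Finset.filter_congr (by intro i _; simp [Fin.ext_iff])
        have h1 : ∏ i ∈ Finset.univ.filter (fun i : Fin (M+1) => (¬ (i:ℕ) = (j:ℕ) ∧ (i:ℕ) < N₁)), B i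
            = ∏ i ∈ Finset.univ.filter (fun i : Fin N₁ => (¬ (i:ℕ) = (j:ℕ) ∧ (i:ℕ) < N₁)), β i := by
          refine prod_fin_part (by omega) (fun x => ¬ x = (j:ℕ) ∧ x < N₁) (fun x h => h.2) B β ?_
          intro i
          simp [hB, i.isLt]
        have h2 : Finset.univ.filter (fun i : Fin N₁ => (¬ (i:ℕ) = (j:ℕ) ∧ (i:ℕ) < N₁))
            = Finset.univ.erase j₀ := by
          ext i
          simp only [Finset.mem_filter, Finset.mem_univ, true_and, Finset.mem_erase, and_true,
            Fin.ext_iff, hj₀, ne_eq]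
          omega
        have h3 : ∏ i ∈ Finset.univ.filter (fun i : Fin (M+1) => ¬ i = j ∧ ¬ (i:ℕ) < N₁), B i = 1 := by
          refine Finset.prod_eq_one ?_
          intro i hi
          simp only [Finset.mem_filter] at hi
          rw [Ideal.one_eq_top, hB]
          exact dif_neg hi.2.2
        rw [A1, h1, h2, h3, mul_one]
      rw [heq]
      exact hx
    have hmem : ((x, 0) : A₁ × A₂) ∈
        Ideal.prod (∏ i ∈ Finset.univ.erase j, B i) (∏ i ∈ Finset.univ.erase j, C i) :=
      ⟨hmem1, Submodule.zero_mem _⟩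
    have := hj hmem
    rw [Ideal.mem_bot] at this
    exact hx0 (by rw [Ideal.mem_bot]; exact congrArg Prod.fst this)
  · -- contradiction with hδ' j₀
    have hjlt := j.isLt
    set j₀ : Fin N₂ := ⟨(j:ℕ) - N₁, by omega⟩ with hj₀
    obtain ⟨x, hx, hx0⟩ := SetLike.not_le_iff_exists.mp (hδ' j₀)
    have hmem2 : x ∈ ∏ i ∈ Finset.univ.erase j, C i := by
      have heq : ∏ i ∈ Finset.univ.erase j, C i = ∏ i ∈ Finset.univ.erase j₀, δ i := by
        rw [herase j,
          ← Finset.prod_filter_mul_prod_filter_not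
            (Finset.univ.filter (fun i : Fin (M+1) => ¬ i = j)) (fun i => (i:ℕ) < N₁) C,
          Finset.filter_filter, Finset.filter_filter]
        have A1 : Finset.univ.filter (fun i : Fin (M+1) => ¬ i = j ∧ ¬ (i:ℕ) < N₁)
            = Finset.univ.filter (fun i : Fin (M+1) => (¬ (i:ℕ) = (j:ℕ) ∧ ¬ (i:ℕ) < N₁)) :=
          Finset.filter_congr (by intro i _; simp [Fin.ext_iff])
        have h1 : ∏ i ∈ Finset.univ.filter (fun i : Fin (M+1) => (¬ (i:ℕ) = (j:ℕ) ∧ ¬ (i:ℕ) < N₁)), C i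
            = ∏ i ∈ Finset.univ.filter (fun i : Fin N₂ => (¬ N₁ + (i:ℕ) = (j:ℕ) ∧ ¬ N₁ + (i:ℕ) < N₁)), δ i := by
          refine prod_fin_part' hMN (fun x => ¬ x = (j:ℕ) ∧ ¬ x < N₁) (fun x h => by omega) C δ ?_
          intro i
          simp only [hC]
          rw [dif_neg (by omega)]
          congr 1
          apply Fin.ext
          simp
        have h2 : Finset.univ.filter (fun i : Fin N₂ => (¬ N₁ + (i:ℕ) = (j:ℕ) ∧ ¬ N₁ + (i:ℕ) < N₁))
            = Finset.univ.erase j₀ := by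
          ext i
          simp only [Finset.mem_filter, Finset.mem_univ, true_and, Finset.mem_erase, and_true,
            Fin.ext_iff, hj₀, ne_eq]
          omega
        have h3 : ∏ i ∈ Finset.univ.filter (fun i : Fin (M+1) => ¬ i = j ∧ (i:ℕ) < N₁), C i = 1 := by
          refine Finset.prod_eq_one ?_
          intro i hi
          simp only [Finset.mem_filter] at hi
          rw [Ideal.one_eq_top, hC]
          exact dif_pos hi.2.2
        rw [A1, h1, h2, h3, one_mul]
      rw [heq]
      exact hx
    have hmem : (((0 : A₁), x) : A₁ × A₂) ∈
        Ideal.prod (∏ i ∈ Finset.univ.erase j, B i) (∏ i ∈ Finset.univ.erase j, C i) :=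
      ⟨Submodule.zero_mem _, hmem2⟩
    have := hj hmem
    rw [Ideal.mem_bot] at this
    exact hx0 (by rw [Ideal.mem_bot]; exact congrArg Prod.snd this)

end Helpers

/-- For a product ring A₁ × A₂, ω*(0) = ω*(0 in A₁) + ω*(0 in A₂), assuming both
are finite. -/
theorem strongly_absorbing_number_prod {A₁ A₂ : Type*} [CommRing A₁] [CommRing A₂]
    (h₁ : ∃ n, IsStronglyAbsorbing (⊥ : Ideal A₁) n)
    (h₂ : ∃ n, IsStronglyAbsorbing (⊥ : Ideal A₂) n) :
    sInf {n : ℕ | IsStronglyAbsorbing (⊥ : Ideal (A₁ × A₂)) n} =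
      sInf {n : ℕ | IsStronglyAbsorbing (⊥ : Ideal A₁) n} +
      sInf {n : ℕ | IsStronglyAbsorbing (⊥ : Ideal A₂) n} := by
  classical
  have hm₁ : IsStronglyAbsorbing (⊥ : Ideal A₁)
      (sInf {n : ℕ | IsStronglyAbsorbing (⊥ : Ideal A₁) n}) := Nat.sInf_mem h₁
  have hm₂ : IsStronglyAbsorbing (⊥ : Ideal A₂)
      (sInf {n : ℕ | IsStronglyAbsorbing (⊥ : Ideal A₂) n}) := Nat.sInf_mem h₂
  have hupper : IsStronglyAbsorbing (⊥ : Ideal (A₁ × A₂))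
      (sInf {n : ℕ | IsStronglyAbsorbing (⊥ : Ideal A₁) n} +
       sInf {n : ℕ | IsStronglyAbsorbing (⊥ : Ideal A₂) n}) := abs_prod_upper hm₁ hm₂
  apply le_antisymm
  · exact Nat.sInf_le hupper
  · refine le_csInf ⟨_, hupper⟩ ?_
    intro m hm
    by_contra hc
    push_neg at hc
    obtain ⟨β, hβ, hβ'⟩ := exists_witness hm₁
      (fun k hk => Nat.notMem_of_lt_sInf hk)
    obtain ⟨δ, hδ, hδ'⟩ := exists_witness hm₂
      (fun k hk => Nat.notMem_of_lt_sInf hk)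
    have hMN : (sInf {n : ℕ | IsStronglyAbsorbing (⊥ : Ideal A₁) n} +
        sInf {n : ℕ | IsStronglyAbsorbing (⊥ : Ideal A₂) n} - 1) + 1 =
        sInf {n : ℕ | IsStronglyAbsorbing (⊥ : Ideal A₁) n} +
        sInf {n : ℕ | IsStronglyAbsorbing (⊥ : Ideal A₂) n} := by omega
    exact not_abs hMN β hβ hβ' δ hδ hδ' (absorb_mono hm (by omega))
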